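/- Let A be a set and Λ a lax extension of the exponential functor H_A = (−)^A. Then the set S(Λ) = { φ : A ⇸ A | 1_A (Λφ) 1_A } is an upwards-closed submonoid of the monoid of endorelations on A under relational composition. Furthermore: (1) if Λ preserves converses, then S(Λ) is closed under converses; (2) if Λ is normal, then every relation in S(Λ) is normal. -/

import Mathlib

open CategoryTheory Function

universe u

/-- Applicative composition of relations: `relComp s r = s · r`. -/
def relComp {X Y Z : Type u} (s : Y → Z → Prop) (r : X → Y → Prop) : X → Z → Prop :=
  fun x z => ∃ y, r x y ∧ s y z

/-- Converse of a relation. -/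
def relConv {X Y : Type u} (r : X → Y → Prop) : Y → X → Prop := fun y x => r x y

/-- Graph relation of a function. -/
def fgraph {X Y : Type u} (f : X → Y) : X → Y → Prop := fun x y => f x = y

/-- An `F`-relator: a monotone assignment of relations `F X ⇸ F Y` to relations `X ⇸ Y`. -/
structure Relator (F : Type u ⥤ Type u) : Type (u + 1) where
  map : ∀ {X Y : Type u}, (X → Y → Prop) → (F.obj X → F.obj Y → Prop)
  mono : ∀ {X Y : Type u} {r s : X → Y → Prop}, (∀ x y, r x y → s x y) →
    ∀ u v, map r u v → map s u v

/-- `f` is a coalgebra homomorphism from `(X, α)` to `(Y, β)`. -/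
def IsCoalgHom (F : Type u ⥤ Type u) {X Y : Type u} (α : X → F.obj X) (β : Y → F.obj Y)
    (f : X → Y) : Prop :=
  ∀ x, β (f x) = F.map (TypeCat.ofHom f) (α x)

/-- Behavioural equivalence of states. -/
def BehEq (F : Type u ⥤ Type u) {X Y : Type u} (α : X → F.obj X) (β : Y → F.obj Y)
    (x : X) (y : Y) : Prop :=
  ∃ (Z : Type u) (γ : Z → F.obj Z) (f : X → Z) (g : Y → Z),
    IsCoalgHom F α γ f ∧ IsCoalgHom F β γ g ∧ f x = g y

/-- `r` is a `Λ`-simulation from `(X, α)` to `(Y, β)`: `r ≤ β° · Λr · α`. -/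
def IsSimulation {F : Type u ⥤ Type u} (Λ : Relator F) {X Y : Type u}
    (α : X → F.obj X) (β : Y → F.obj Y) (r : X → Y → Prop) : Prop :=
  ∀ x y, r x y → Λ.map r (α x) (β y)

/-- `x` and `y` are `Λ`-similar: related by some `Λ`-simulation. -/
def RelSimilar {F : Type u ⥤ Type u} (Λ : Relator F) {X Y : Type u}
    (α : X → F.obj X) (β : Y → F.obj Y) (x : X) (y : Y) : Prop :=
  ∃ r, IsSimulation Λ α β r ∧ r x y

/-- `Λ` is a relax extension of `F`: `Ff ≤ Λf` and `(Ff)° ≤ Λ(f°)` for all functions `f`. -/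
def IsRelaxExtension (F : Type u ⥤ Type u) (Λ : Relator F) : Prop :=
  ∀ {X Y : Type u} (f : X → Y),
    (∀ (u : F.obj X) (v : F.obj Y), F.map (TypeCat.ofHom f) u = v → Λ.map (fgraph f) u v) ∧
    (∀ (v : F.obj Y) (u : F.obj X), F.map (TypeCat.ofHom f) u = v → Λ.map (relConv (fgraph f)) v u)

/-- `Λ` is a lax extension of `F`: a relax extension with `Λs · Λr ≤ Λ(s · r)`. -/
def IsLaxExtension (F : Type u ⥤ Type u) (Λ : Relator F) : Prop :=
  IsRelaxExtension F Λ ∧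
    ∀ {X Y Z : Type u} (r : X → Y → Prop) (s : Y → Z → Prop)
      (u : F.obj X) (w : F.obj Z),
      relComp (Λ.map s) (Λ.map r) u w → Λ.map (relComp s r) u w

/-- `Λ` is normal: `Λ1_X = 1_{FX}` for every set `X`. -/
def IsNormal (F : Type u ⥤ Type u) (Λ : Relator F) : Prop :=
  ∀ (X : Type u) (u v : F.obj X), Λ.map (@Eq X) u v ↔ u = v

/-- A relation is difunctional if it is of the form `g° · f` for functions `f`, `g`. -/
def IsDifunctional {X Y : Type u} (r : X → Y → Prop) : Prop :=
  ∃ (Z : Type u) (f : X → Z) (g : Y → Z), ∀ x y, r x y ↔ f x = g y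

/-- `c` is the difunctional closure of `r`. -/
def IsDifunClosure {X Y : Type u} (r c : X → Y → Prop) : Prop :=
  IsDifunctional c ∧ (∀ x y, r x y → c x y) ∧
    ∀ d : X → Y → Prop, IsDifunctional d → (∀ x y, r x y → d x y) → ∀ x y, c x y → d x y

/-- An endorelation `φ` on `A` is normal if its difunctional closure is reflexive. -/
def NormalRel {A : Type u} (φ : A → A → Prop) : Prop :=
  ∃ c : A → A → Prop, IsDifunClosure φ c ∧ ∀ a, c a a

/-- The exponential functor `H_A = (−)^A`. -/
def expFunctor (A : Type u) : Type u ⥤ Type u where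
  obj X := A → X
  map f := TypeCat.ofHom (fun h => f ∘ h)
  map_id := by intros; rfl
  map_comp := by intros; rfl

/-- The set `S(Λ) = { φ : A ⇸ A | 1_A (Λφ) 1_A }` of endorelations induced by a
relator `Λ` of `H_A`. -/
def SLam (A : Type u) (Λ : Relator (expFunctor A)) : Set (A → A → Prop) :=
  {φ | Λ.map φ (id : A → A) (id : A → A)}

/-- For a lax extension `Λ` of `H_A = (−)^A`, the set `S(Λ)` is an
upwards-closed submonoid of the monoid of endorelations on `A` under relational
composition. Moreover: (1) if `Λ` preserves converses then `S(Λ)` is closed under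
converses; (2) if `Λ` is normal then every relation in `S(Λ)` is normal. -/
theorem stmt15 (A : Type u) (Λ : Relator (expFunctor A))
    (hlax : IsLaxExtension (expFunctor A) Λ) :
    ((@Eq A) ∈ SLam A Λ) ∧
    (∀ φ ψ : A → A → Prop, φ ∈ SLam A Λ → ψ ∈ SLam A Λ → relComp ψ φ ∈ SLam A Λ) ∧
    (∀ φ ψ : A → A → Prop, φ ∈ SLam A Λ → (∀ a b, φ a b → ψ a b) → ψ ∈ SLam A Λ) ∧
    ((∀ (X Y : Type u) (r : X → Y → Prop)
        (g : (expFunctor A).obj Y) (f : (expFunctor A).obj X),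
        Λ.map (relConv r) g f ↔ Λ.map r f g) →
      ∀ φ ∈ SLam A Λ, relConv φ ∈ SLam A Λ) ∧
    (IsNormal (expFunctor A) Λ → ∀ φ ∈ SLam A Λ, NormalRel φ) := by
  obtain ⟨hrelax, hcomp⟩ := hlax
  unfold IsRelaxExtension at hrelax
  refine ⟨?_, ?_, ?_, ?_, ?_⟩
  · -- identity
    exact Λ.mono (fun x y h => h) id id ((hrelax (id : A → A)).1 id id rfl)
  · -- composition
    intro φ ψ hφ hψ
    exact hcomp φ ψ id id ⟨id, hφ, hψ⟩
  · -- upwards closed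
    intro φ ψ hφ hle
    exact Λ.mono hle id id hφ
  · -- converses
    intro hconv φ hφ
    exact (hconv A A φ id id).mpr hφ
  · -- normality
    intro hnorm φ hφ
    classical
    set R : (A ⊕ A) → (A ⊕ A) → Prop :=
      fun p q => ∃ a b, φ a b ∧ p = Sum.inl a ∧ q = Sum.inr b with hR
    let Q := Quot R
    let f : A → Q := fun a => Quot.mk R (Sum.inl a)
    let g : A → Q := fun a => Quot.mk R (Sum.inr a)
    let c : A → A → Prop := fun x y => f x = g y
    have hcont : ∀ x y, φ x y → c x y := fun x y h =>
      Quot.sound ⟨x, y, h, rfl, rfl⟩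
    have hdifun : IsDifunctional c := ⟨Q, f, g, fun _ _ => Iff.rfl⟩
    have hleast : ∀ d : A → A → Prop, IsDifunctional d →
        (∀ x y, φ x y → d x y) → ∀ x y, c x y → d x y := by
      intro d hd hle x y hc
      obtain ⟨Z, f', g', hiff⟩ := hd
      have hresp : ∀ p q, R p q → Sum.elim f' g' p = Sum.elim f' g' q := by
        rintro p q ⟨a, b, hab, rfl, rfl⟩
        exact (hiff a b).mp (hle a b hab)
      have := congrArg (Quot.lift (Sum.elim f' g') hresp) hc
      exact (hiff x y).mpr this
    -- reflexivity of the difunctional closure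
    have h1 : Λ.map (relConv (fgraph f)) f id := (hrelax f).2 f id rfl
    have h2 : Λ.map (relComp (relConv (fgraph g)) (fgraph f)) id id := by
      refine Λ.mono (fun x y hxy => ⟨f x, rfl, ?_⟩) id id hφ
      exact (hcont x y hxy).symm
    have h3 : Λ.map (fgraph g) id g := (hrelax g).1 id g rfl
    have ha : Λ.map (relComp (relComp (relConv (fgraph g)) (fgraph f))
        (relConv (fgraph f))) f id :=
      hcomp _ _ f id ⟨id, h1, h2⟩
    have hb : Λ.map (relComp (fgraph g) (relComp (relComp (relConv (fgraph g))
        (fgraph f)) (relConv (fgraph f)))) f g :=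
      hcomp _ _ f g ⟨id, ha, h3⟩
    have hc' : Λ.map (@Eq Q) f g := by
      refine Λ.mono ?_ f g hb
      rintro z z' ⟨y, ⟨a, hza, hay⟩, hyz'⟩
      obtain ⟨w, hfw, hgw⟩ := hay
      calc z = f a := hza.symm
        _ = g y := hfw.trans hgw.symm
        _ = z' := hyz'
    have hfg : f = g := (hnorm Q f g).mp hc'
    exact ⟨c, ⟨hdifun, hcont, hleast⟩, fun a => congrFun hfg a⟩
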